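/- arXiv:2107.06838 — 4 statements merged into one kernel-verified Lean document; each statement's English description precedes it below -/
import Mathlib

section
/- Let K be a field with char K ≠ 2 (or char K = 0), and n ≥ 2. Consider the natural action of the symmetric group S_n on K^n permuting coordinates. Then the only S_n-stable (invariant) linear subspaces of K^n other than 0 and K^n are L = span(1,1,...,1) and M = {(α_1,...,α_n) : α_1 + ... + α_n = 0}. -/
/-- The only `Sₙ`-stable subspaces of `Kⁿ` (permutation action on coordinates) are
`0`, `Kⁿ`, the line `L` spanned by the all-ones vector, and the hyperplane `M` of
vectors with coordinate sum zero. -/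
theorem symmetric_group_invariant_subspaces
    (K : Type*) [Field K] (hK : ringChar K ≠ 2) (n : ℕ) (hn : 2 ≤ n)
    (W : Submodule K (Fin n → K))
    (hW : ∀ σ : Equiv.Perm (Fin n), ∀ v ∈ W, (fun i => v (σ i)) ∈ W) :
    W = ⊥ ∨ W = ⊤ ∨
      W = Submodule.span K {(fun _ => (1 : K) : Fin n → K)} ∨
      W = LinearMap.ker (∑ i : Fin n, LinearMap.proj (R := K) (φ := fun _ : Fin n => K) i) := by
  have hn0 : (0 : ℕ) < n := by omega
  set z : Fin n := ⟨0, hn0⟩ with hz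
  set S : (Fin n → K) →ₗ[K] K :=
    ∑ i : Fin n, LinearMap.proj (R := K) (φ := fun _ : Fin n => K) i with hS
  have hSapp : ∀ x : Fin n → K, S x = ∑ i, x i := by
    intro x
    simp [hS, LinearMap.sum_apply]
  by_cases hconst : ∀ v ∈ W, ∀ i j : Fin n, v i = v j
  · -- W ≤ L
    have hWL : W ≤ Submodule.span K {(fun _ => (1 : K) : Fin n → K)} := by
      intro v hv
      have hv' : v = v z • (fun _ => (1 : K)) := by
        funext i
        simp [hconst v hv i z]
      rw [hv']
      exact Submodule.smul_mem _ _ (Submodule.mem_span_singleton_self _)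
    by_cases hbot : W = ⊥
    · exact Or.inl hbot
    · refine Or.inr (Or.inr (Or.inl (le_antisymm hWL ?_)))
      obtain ⟨w, hwW, hw0⟩ := Submodule.exists_mem_ne_zero_of_ne_bot hbot
      have hc : w z ≠ 0 := by
        intro h
        apply hw0
        funext i
        rw [hconst w hwW i z, h]; rfl
      have hone : (fun _ => (1 : K) : Fin n → K) = (w z)⁻¹ • w := by
        funext i
        simp [hconst w hwW i z, inv_mul_cancel₀ hc]
      rw [Submodule.span_singleton_le_iff_mem, hone]
      exact Submodule.smul_mem _ _ hwW
  · push_neg at hconst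
    obtain ⟨v, hvW, i, j, hvij⟩ := hconst
    have hij : i ≠ j := by rintro rfl; exact hvij rfl
    -- e_i - e_j ∈ W
    have hdij : (Pi.single i 1 - Pi.single j 1 : Fin n → K) ∈ W := by
      have hu : (fun k => v k - v (Equiv.swap i j k)) ∈ W :=
        W.sub_mem hvW (hW (Equiv.swap i j) v hvW)
      have heq : (fun k => v k - v (Equiv.swap i j k)) =
          (v i - v j) • (Pi.single i 1 - Pi.single j 1 : Fin n → K) := by
        funext k
        rcases eq_or_ne k i with rfl | hki
        · simp [Equiv.swap_apply_left, Pi.single_eq_same, Pi.single_eq_of_ne hij]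
        · rcases eq_or_ne k j with rfl | hkj
          · simp [Equiv.swap_apply_right, Pi.single_eq_same, Pi.single_eq_of_ne hij.symm]
          · simp [Equiv.swap_apply_of_ne_of_ne hki hkj, Pi.single_eq_of_ne hki,
              Pi.single_eq_of_ne hkj]
      have hne : v i - v j ≠ 0 := sub_ne_zero_of_ne hvij
      have := W.smul_mem (v i - v j)⁻¹ (heq ▸ hu)
      rwa [smul_smul, inv_mul_cancel₀ hne, one_smul] at this
    -- all e_k - e_l ∈ W
    have hkey : ∀ k l : Fin n, k ≠ l →
        (Pi.single k 1 - Pi.single l 1 : Fin n → K) ∈ W := by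
      intro k l hkl
      set τ₁ : Equiv.Perm (Fin n) := Equiv.swap k i with hτ₁
      have hτ₁k : τ₁ k = i := Equiv.swap_apply_left k i
      set j' : Fin n := τ₁ l with hj'
      have hij' : i ≠ j' := by
        intro h
        exact hkl (τ₁.injective (by rw [hτ₁k, h, hj']))
      set τ₂ : Equiv.Perm (Fin n) := Equiv.swap j' j with hτ₂
      set σ : Equiv.Perm (Fin n) := τ₁.trans τ₂ with hσ
      have hσk : σ k = i := by
        simp only [hσ, Equiv.trans_apply, hτ₁k, hτ₂]
        exact Equiv.swap_apply_of_ne_of_ne hij' hij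
      have hσl : σ l = j := by
        simp only [hσ, Equiv.trans_apply, ← hj', hτ₂]
        exact Equiv.swap_apply_left j' j
      have hmem := hW σ _ hdij
      have heq : (fun m => (Pi.single i 1 - Pi.single j 1 : Fin n → K) (σ m)) =
          (Pi.single k 1 - Pi.single l 1 : Fin n → K) := by
        funext m
        rcases eq_or_ne m k with rfl | hmk
        · simp [hσk, Pi.single_eq_same, Pi.single_eq_of_ne hij, Pi.single_eq_of_ne hkl]
        · rcases eq_or_ne m l with rfl | hml
          · simp [hσl, Pi.single_eq_same, Pi.single_eq_of_ne hij.symm,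
              Pi.single_eq_of_ne hkl.symm]
          · have h1 : σ m ≠ i := fun h => hmk (σ.injective (h.trans hσk.symm))
            have h2 : σ m ≠ j := fun h => hml (σ.injective (h.trans hσl.symm))
            simp [Pi.single_eq_of_ne h1, Pi.single_eq_of_ne h2,
              Pi.single_eq_of_ne hmk, Pi.single_eq_of_ne hml]
      rwa [heq] at hmem
    -- M ≤ W
    have hMW : LinearMap.ker S ≤ W := by
      intro m hm
      have hsum : ∑ k, m k = 0 := by
        have := LinearMap.mem_ker.mp hm
        rwa [hSapp] at this
      have hrep : m = ∑ k : Fin n, m k • (Pi.single k 1 - Pi.single z 1 : Fin n → K) := by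
        funext t
        simp only [Finset.sum_apply, Pi.smul_apply, Pi.sub_apply, smul_eq_mul, mul_sub]
        rw [Finset.sum_sub_distrib]
        have h1 : ∑ k : Fin n, m k * (Pi.single k 1 : Fin n → K) t = m t := by
          rw [Finset.sum_eq_single t]
          · simp
          · intro b _ hb
            simp [Pi.single_eq_of_ne hb.symm]
          · simp
        have h2 : ∑ k : Fin n, m k * (Pi.single z 1 : Fin n → K) t =
            (∑ k, m k) * (Pi.single z 1 : Fin n → K) t := by
          rw [Finset.sum_mul]
        rw [h1, h2, hsum, zero_mul, sub_zero]
      rw [hrep]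
      refine Submodule.sum_mem _ fun k _ => ?_
      rcases eq_or_ne k z with rfl | hkz
      · simp
      · exact W.smul_mem _ (hkey k z hkz)
    by_cases hWM : W = LinearMap.ker S
    · exact Or.inr (Or.inr (Or.inr hWM))
    · refine Or.inr (Or.inl ?_)
      obtain ⟨w, hwW, hwM⟩ := SetLike.exists_of_lt (lt_of_le_of_ne hMW (Ne.symm hWM))
      have hsw : S w ≠ 0 := fun h => hwM (LinearMap.mem_ker.mpr h)
      rw [eq_top_iff]
      intro x _
      have hx : x - (S x / S w) • w ∈ LinearMap.ker S := by
        rw [LinearMap.mem_ker, map_sub, map_smul, smul_eq_mul,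
          div_mul_cancel₀ _ hsw, sub_self]
      have := W.add_mem (hMW hx) (W.smul_mem (S x / S w) hwW)
      simpa using this
end

section
/- Let D = ∑_{i=1}^n ∂/∂x_i acting on K[x_1,...,x_n]. Then D(h_k) = (n+k-1)·h_{k-1}, where h_k is the k-th complete homogeneous symmetric polynomial in x_1,...,x_n (with h_0 = 1). -/
open MvPolynomial

lemma multiset_map_X_prod {σ : Type*} [DecidableEq σ] {K : Type*} [CommRing K]
    (m : Multiset σ) :
    (m.map (X : σ → MvPolynomial σ K)).prod = monomial (Multiset.toFinsupp m) 1 := by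
  induction m using Multiset.induction with
  | empty => simp [monomial_zero']
  | cons a m ih =>
      rw [Multiset.map_cons, Multiset.prod_cons, ih, X, monomial_mul, one_mul,
        ← Multiset.singleton_add, Multiset.toFinsupp_add, Multiset.toFinsupp_singleton]

lemma toFinsupp_cons {σ : Type*} [DecidableEq σ] {k : ℕ} (i : σ) (t : Sym σ k) :
    Multiset.toFinsupp ((i ::ₛ t) : Sym σ (k + 1)).1
      = Finsupp.single i 1 + Multiset.toFinsupp t.1 := by
  rw [show ((i ::ₛ t) : Sym σ (k + 1)).1 = i ::ₘ t.1 from rfl, ← Multiset.singleton_add,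
    Multiset.toFinsupp_add, Multiset.toFinsupp_singleton]

/-- For `D = ∑ᵢ ∂/∂xᵢ` acting on `K[x₁,…,xₙ]`, `D(hₖ) = (n+k-1)·h_{k-1}` for the
complete homogeneous symmetric polynomials. -/
theorem sum_pderiv_hsymm (K : Type*) [CommRing K] (n k : ℕ) (hk1 : 1 ≤ k) :
    (∑ i : Fin n, pderiv i (hsymm (Fin n) K k)) =
      ((n + k - 1 : ℕ) : MvPolynomial (Fin n) K) * hsymm (Fin n) K (k - 1) := by
  classical
  obtain ⟨k, rfl⟩ : ∃ m, k = m + 1 := ⟨k - 1, (Nat.succ_pred_eq_of_pos hk1).symm⟩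
  simp only [Nat.add_sub_cancel, hsymm]
  have key : ∀ i : Fin n,
      pderiv i (∑ s : Sym (Fin n) (k + 1), ((s.1.map X).prod : MvPolynomial (Fin n) K))
        = ∑ t : Sym (Fin n) k,
            monomial (Multiset.toFinsupp t.1) ((t.1.count i + 1 : ℕ) : K) := by
    intro i
    rw [map_sum, ← Finset.sum_filter_of_ne (p := fun s : Sym (Fin n) (k+1) => i ∈ s)
      (fun s _ hne => by
        by_contra hmem
        apply hne
        rw [multiset_map_X_prod, pderiv_monomial]
        have h0 : Multiset.count i s.1 = 0 :=
          Multiset.count_eq_zero.mpr (by simpa using hmem)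
        simp only [Multiset.toFinsupp_apply, h0, Nat.cast_zero, mul_zero, map_zero])]
    refine (Finset.sum_bij' (fun t _ => i ::ₛ t)
      (fun s hs => Sym.erase s i (by simpa using (Finset.mem_filter.mp hs).2))
      (fun t _ => by simp [Sym.mem_cons_self]) (fun s _ => Finset.mem_univ _)
      (fun t _ => Sym.erase_cons_head t i) (fun s hs => Sym.cons_erase _)
      (fun t _ => ?_)).symm
    rw [multiset_map_X_prod, pderiv_monomial, one_mul]
    congr 1
    · rw [toFinsupp_cons, add_tsub_cancel_left]
    · rw [toFinsupp_cons]
      simp [Multiset.toFinsupp_apply, add_comm]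
  rw [Finset.sum_congr rfl fun i _ => key i]
  rw [Finset.sum_comm, Finset.mul_sum]
  refine Finset.sum_congr rfl fun t _ => ?_
  rw [← map_sum (monomial (Multiset.toFinsupp t.1))]
  rw [multiset_map_X_prod, ← C_eq_coe_nat, C_mul_monomial, mul_one]
  congr 1
  push_cast
  rw [Finset.sum_add_distrib, Finset.sum_const, ← Nat.cast_sum]
  rw [Multiset.sum_count_eq_card (fun a _ => Finset.mem_univ a)]
  simp [t.2]
  ring
end

section
/- Let K be an algebraically closed field of characteristic 2. The polynomial h_3(x,y,z) = x^3 + y^3 + z^3 + x^2y + x^2z + xy^2 + xz^2 + y^2z + yz^2 + xyz, rewritten in the variables t = x - y, q = y - z, r = z, equals t^3 + t^2 r + tqr + q^2 r, and this polynomial is irreducible in K[t,q,r]. -/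
open MvPolynomial

open MvPolynomial

private lemma primeX1 (K : Type*) [Field K] :
    Prime (X 1 : MvPolynomial (Fin 2) K) := by
  have h0 : Prime (X 0 : MvPolynomial (Fin 2) K) := by
    rw [← MulEquiv.prime_iff (p := X 0) (finSuccEquiv K 1).toMulEquiv]
    have : (finSuccEquiv K 1).toMulEquiv (X 0) = Polynomial.X := finSuccEquiv_X_zero
    rw [this]
    exact Polynomial.prime_X
  have h := (MulEquiv.prime_iff (renameEquiv K (Equiv.swap (0:Fin 2) 1)).toMulEquiv (p := X 0)).mpr h0
  have e : (renameEquiv K (Equiv.swap (0:Fin 2) 1)).toMulEquiv (X 0) = (X 1 : MvPolynomial (Fin 2) K) := by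
    simp
  rwa [e] at h

private lemma irred_aux (K : Type*) [Field K] :
    Irreducible
        (X 0 ^ 3 + X 0 ^ 2 * X 2 + X 0 * X 1 * X 2 + X 1 ^ 2 * X 2 :
          MvPolynomial (Fin 3) K) := by
  set R2 := MvPolynomial (Fin 2) K
  set f : Polynomial R2 :=
    Polynomial.X ^ 3 + Polynomial.C (X 1) * Polynomial.X ^ 2 +
      Polynomial.C (X 0 * X 1) * Polynomial.X + Polynomial.C (X 0 ^ 2 * X 1) with hf
  have hmonic : f.Monic := by
    unfold f
    monicity!
  have hdeg : f.natDegree = 3 := by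
    unfold f
    compute_degree!
  have hcoeffs : ∀ n, f.coeff n =
      (Polynomial.X ^ 3 : Polynomial R2).coeff n +
      (Polynomial.C (X 1 : R2) * Polynomial.X ^ 2).coeff n +
      (Polynomial.C ((X 0 : R2) * X 1) * Polynomial.X).coeff n +
      (Polynomial.C ((X 0 : R2) ^ 2 * X 1)).coeff n := by
    intro n; rw [hf]; simp only [Polynomial.coeff_add]
  have hc0 : f.coeff 0 = X 0 ^ 2 * X 1 := by
    rw [hcoeffs]
    simp only [Polynomial.coeff_C_mul, Polynomial.coeff_X_pow, Polynomial.coeff_X,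
      Polynomial.coeff_C]
    norm_num
  have hc1 : f.coeff 1 = X 0 * X 1 := by
    rw [hcoeffs]
    simp only [Polynomial.coeff_C_mul, Polynomial.coeff_X_pow, Polynomial.coeff_X,
      Polynomial.coeff_C]
    norm_num
  have hc2 : f.coeff 2 = X 1 := by
    rw [hcoeffs]
    simp only [Polynomial.coeff_C_mul, Polynomial.coeff_X_pow, Polynomial.coeff_X,
      Polynomial.coeff_C]
    norm_num
  have hprX : Prime (X 1 : R2) := primeX1 K
  have hPprime : (Ideal.span {(X 1 : R2)}).IsPrime :=
    (Ideal.span_singleton_prime (X_ne_zero 1)).mpr hprX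
  have hndvd : ¬ (X 1 : R2) ∣ X 0 := by
    rintro ⟨d, hd⟩
    have := congrArg (eval (fun i : Fin 2 => if i = 1 then (0:K) else 1)) hd
    simp at this
  have hEis : f.IsEisensteinAt (Ideal.span {(X 1 : R2)}) := by
    constructor
    · rw [hmonic.leadingCoeff]
      intro h
      exact hPprime.ne_top ((Ideal.eq_top_iff_one _).mpr h)
    · intro n hn
      rw [hdeg] at hn
      interval_cases n
      · rw [hc0]; exact Ideal.mem_span_singleton.mpr ⟨X 0 ^ 2, by ring⟩
      · rw [hc1]; exact Ideal.mem_span_singleton.mpr ⟨X 0, by ring⟩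
      · rw [hc2]; exact Ideal.mem_span_singleton.mpr ⟨1, by ring⟩
    · rw [hc0, Ideal.span_singleton_pow, Ideal.mem_span_singleton]
      rintro ⟨c, hc⟩
      have hr : (X 1 : R2) ≠ 0 := X_ne_zero 1
      have h1 : (X 1 : R2) * (X 0 ^ 2) = X 1 * (X 1 * c) := by linear_combination hc
      have h2 : (X 0 : R2) ^ 2 = X 1 * c := mul_left_cancel₀ hr h1
      have h3 : (X 1 : R2) ∣ X 0 * X 0 := ⟨c, by linear_combination h2⟩
      rcases hprX.2.2 _ _ h3 with h | h
      · exact hndvd h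
      · exact hndvd h
  have hirr_f : Irreducible f := hEis.irreducible hPprime hmonic.isPrimitive (by omega)
  have himg : (finSuccEquiv K 2)
      (X 0 ^ 3 + X 0 ^ 2 * X 2 + X 0 * X 1 * X 2 + X 1 ^ 2 * X 2 : MvPolynomial (Fin 3) K) = f := by
    have e1 : (X 1 : MvPolynomial (Fin 3) K) = X (Fin.succ 0) := rfl
    have e2 : (X 2 : MvPolynomial (Fin 3) K) = X (Fin.succ 1) := rfl
    rw [e1, e2]
    simp only [map_add, map_mul, map_pow, finSuccEquiv_X_zero, finSuccEquiv_X_succ, hf, map_mul]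
    push_cast
    ring
  exact (MulEquiv.irreducible_iff (finSuccEquiv K 2)).mp (himg ▸ hirr_f)

private lemma rewrite_aux (K : Type*) [Field K] [CharP K 2] :
    ((X 0 + X 1 + X 2 : MvPolynomial (Fin 3) K)) ^ 3 + (X 1 + X 2) ^ 3 + (X 2) ^ 3 +
        (X 0 + X 1 + X 2) ^ 2 * (X 1 + X 2) + (X 0 + X 1 + X 2) ^ 2 * X 2 +
        (X 0 + X 1 + X 2) * (X 1 + X 2) ^ 2 + (X 0 + X 1 + X 2) * X 2 ^ 2 +
        (X 1 + X 2) ^ 2 * X 2 + (X 1 + X 2) * X 2 ^ 2 + (X 0 + X 1 + X 2) * (X 1 + X 2) * X 2 =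
      X 0 ^ 3 + X 0 ^ 2 * X 2 + X 0 * X 1 * X 2 + X 1 ^ 2 * X 2 := by
  have h2 : (2 : MvPolynomial (Fin 3) K) = 0 := by
    have := CharP.cast_eq_zero (MvPolynomial (Fin 3) K) 2
    exact_mod_cast this
  linear_combination (2 * (X 0 : MvPolynomial (Fin 3) K) ^ 2 * X 1 + 2 * X 0 ^ 2 * X 2 +
    3 * X 0 * X 1 ^ 2 + 7 * X 0 * X 1 * X 2 + 5 * X 0 * X 2 ^ 2 + 2 * X 1 ^ 3 +
    7 * X 1 ^ 2 * X 2 + 10 * X 1 * X 2 ^ 2 + 5 * X 2 ^ 3) * h2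

/-- In characteristic 2, the complete homogeneous polynomial `h₃(x,y,z)`, rewritten in
the variables `t = x - y`, `q = y - z`, `r = z` (i.e. `x = t+q+r`, `y = q+r`, `z = r`),
equals `t³ + t²r + tqr + q²r`, and this polynomial is irreducible. -/
theorem h3_char_two_rewrite_and_irreducible
    (K : Type*) [Field K] [IsAlgClosed K] [CharP K 2] :
    (letI t : MvPolynomial (Fin 3) K := X 0
     letI q : MvPolynomial (Fin 3) K := X 1
     letI r : MvPolynomial (Fin 3) K := X 2
     letI x := t + q + r
     letI y := q + r
     letI z := r
     x ^ 3 + y ^ 3 + z ^ 3 + x ^ 2 * y + x ^ 2 * z + x * y ^ 2 + x * z ^ 2 +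
         y ^ 2 * z + y * z ^ 2 + x * y * z =
       t ^ 3 + t ^ 2 * r + t * q * r + q ^ 2 * r) ∧
      Irreducible
        (X 0 ^ 3 + X 0 ^ 2 * X 2 + X 0 * X 1 * X 2 + X 1 ^ 2 * X 2 :
          MvPolynomial (Fin 3) K) :=
  ⟨rewrite_aux K, irred_aux K⟩
end

section
/- Let K be an algebraically closed field of characteristic 0 or p with p ∤ n, let d ≥ 2 with n > d, and let λ be a partition of d all of whose parts are at least 2. If additionally (in positive characteristic) p does not divide (n+1-k_i)·a_i for some part size k_i with multiplicity a_i in λ, then l = x_1+...+x_n does not divide e_λ = ∏_i e_{λ_i} and D(e_λ) ≠ 0, where D = ∑_i ∂/∂x_i. -/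
open MvPolynomial Finset

private lemma derivation_sum_apply' {R A M ι : Type*} [CommSemiring R] [CommSemiring A]
    [Algebra R A] [AddCommMonoid M] [Module A M] [Module R M] (s : Finset ι)
    (D : ι → Derivation R A M) (p : A) :
    (∑ j ∈ s, D j) p = ∑ j ∈ s, D j p := by
  classical
  induction s using Finset.induction with
  | empty => simp
  | @insert _ _ hx ih => simp [Finset.sum_insert hx, Derivation.add_apply, ih]

private lemma prod_monomial_one' {σ K ι : Type*} [CommSemiring K] (s : Finset ι)
    (t : ι → (σ →₀ ℕ)) :
    ∏ i ∈ s, (monomial (t i) (1 : K)) = monomial (∑ i ∈ s, t i) 1 := by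
  classical
  induction s using Finset.induction with
  | empty => simp
  | @insert x s hx ih =>
    rw [Finset.prod_insert hx, ih, monomial_mul, one_mul, Finset.sum_insert hx]

private lemma derivation_prod {R A ι : Type*} [DecidableEq ι] [CommSemiring R] [CommSemiring A]
    [Algebra R A] (D : Derivation R A A) (s : Finset ι) (f : ι → A) :
    D (∏ i ∈ s, f i) = ∑ i ∈ s, (∏ j ∈ s.erase i, f j) * D (f i) := by
  classical
  induction s using Finset.induction with
  | empty => simp
  | @insert x s hx ih =>
    rw [Finset.prod_insert hx, D.leibniz, smul_eq_mul, smul_eq_mul, ih, Finset.mul_sum,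
      Finset.sum_insert hx, Finset.erase_insert hx, add_comm]
    congr 1
    refine Finset.sum_congr rfl fun i hi => ?_
    rw [Finset.erase_insert_of_ne (by rintro rfl; exact hx hi),
      Finset.prod_insert (fun h => hx (Finset.mem_of_mem_erase h)), mul_assoc]

private lemma sum_pderiv_esymm (K : Type*) [CommSemiring K] {n m : ℕ} (h1 : 1 ≤ m) (hmn : m ≤ n) :
    ∑ j : Fin n, pderiv j (esymm (Fin n) K m) = (n + 1 - m) • esymm (Fin n) K (m - 1) := by
  classical
  have hs : ∀ (t : Finset (Fin n)) (j : Fin n),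
      ((∑ x ∈ t, Finsupp.single x 1 : Fin n →₀ ℕ)) j = if j ∈ t then 1 else 0 := by
    intro t j
    rw [Finsupp.finset_sum_apply]
    simp [Finsupp.single_apply]
  rw [esymm_eq_sum_monomial, esymm_eq_sum_monomial, Finset.smul_sum]
  simp_rw [map_sum, pderiv_monomial]
  rw [Finset.sum_comm]
  have key : ∀ t ∈ powersetCard m (univ : Finset (Fin n)),
      (∑ j : Fin n, monomial ((∑ x ∈ t, Finsupp.single x 1) - Finsupp.single j 1)
        ((1 : K) * ((∑ x ∈ t, Finsupp.single x 1 : Fin n →₀ ℕ) j)))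
      = ∑ j ∈ t, monomial (∑ x ∈ t.erase j, Finsupp.single x 1) (1 : K) := by
    intro t _
    rw [← Finset.sum_subset (Finset.subset_univ t) (fun j _ hj => by
      rw [hs, if_neg hj]; simp)]
    refine Finset.sum_congr rfl fun j hj => ?_
    have h1 : (∑ x ∈ t, Finsupp.single x (1:ℕ)) - Finsupp.single j 1
        = ∑ x ∈ t.erase j, Finsupp.single x 1 := by
      rw [← Finset.sum_erase_add t _ hj, add_tsub_cancel_right]
    rw [hs, if_pos hj, h1]
    norm_num
  rw [Finset.sum_congr rfl key]
  have hr : ∀ T ∈ powersetCard (m - 1) (univ : Finset (Fin n)),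
      (n + 1 - m) • (monomial (∑ x ∈ T, Finsupp.single x 1) (1 : K))
      = ∑ _j ∈ Tᶜ, monomial (∑ x ∈ T, Finsupp.single x 1) (1 : K) := by
    intro T hT
    rw [Finset.sum_const, Finset.card_compl, (Finset.mem_powersetCard_univ).1 hT,
      Fintype.card_fin]
    congr 1
    omega
  rw [Finset.sum_congr rfl hr]
  rw [Finset.sum_sigma', Finset.sum_sigma']
  refine Finset.sum_nbij' (i := fun p => ⟨p.1.erase p.2, p.2⟩)
    (j := fun p => ⟨insert p.2 p.1, p.2⟩) ?_ ?_ ?_ ?_ ?_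
  · rintro ⟨t, j⟩ hp
    rw [Finset.mem_sigma] at hp ⊢
    obtain ⟨ht, hj⟩ := hp
    rw [Finset.mem_powersetCard_univ] at ht ⊢
    exact ⟨by rw [Finset.card_erase_of_mem hj, ht], Finset.mem_compl.2 (Finset.notMem_erase _ _)⟩
  · rintro ⟨T, j⟩ hp
    rw [Finset.mem_sigma] at hp ⊢
    obtain ⟨hT, hj⟩ := hp
    rw [Finset.mem_powersetCard_univ] at hT ⊢
    rw [Finset.mem_compl] at hj
    exact ⟨by rw [Finset.card_insert_of_notMem hj, hT]; omega, Finset.mem_insert_self _ _⟩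
  · rintro ⟨t, j⟩ hp
    rw [Finset.mem_sigma] at hp
    exact Sigma.ext (by simp [Finset.insert_erase hp.2]) (by simp)
  · rintro ⟨T, j⟩ hp
    rw [Finset.mem_sigma] at hp
    have hj := Finset.mem_compl.1 hp.2
    exact Sigma.ext (by simp [Finset.erase_insert hj]) (by simp)
  · rintro ⟨t, j⟩ _
    rfl

/-- Let `λ ⊢ d` be a partition with all parts ≥ 2, written in multiplicity form with
distinct part sizes `k i` occurring with multiplicities `a i`, and suppose `d < n`,
`n ≠ 0` in `K`, and `(n + 1 - k i)·(a i) ≠ 0` in `K` for some `i`.  Then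
`l = x₁ + ⋯ + xₙ` does not divide `e_λ = ∏ᵢ e_{k i}^{a i}` and `D(e_λ) ≠ 0`,
where `D = ∑ⱼ ∂/∂xⱼ`. -/
theorem esymm_prod_not_dvd_and_sum_pderiv_ne_zero
    (K : Type*) [Field K] [IsAlgClosed K] (n d : ℕ) (hd : 2 ≤ d) (hdn : d < n)
    (hchar : (n : K) ≠ 0)
    (l : ℕ) (k a : Fin l → ℕ)
    (hk2 : ∀ i, 2 ≤ k i) (ha1 : ∀ i, 1 ≤ a i) (hkinj : Function.Injective k)
    (hsum : ∑ i, k i * a i = d)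
    (hcoeff : ∃ i, (((n + 1 - k i) * a i : ℕ) : K) ≠ 0) :
    ¬ (∑ j : Fin n, (X j : MvPolynomial (Fin n) K)) ∣
        (∏ i, esymm (Fin n) K (k i) ^ a i) ∧
      (∑ j : Fin n, pderiv j (∏ i, esymm (Fin n) K (k i) ^ a i)) ≠ 0 := by
  classical
  have hn0 : 0 < n := by omega
  have hkd : ∀ i, k i ≤ d := by
    intro i
    calc k i ≤ k i * a i := Nat.le_mul_of_pos_right _ (ha1 i)
    _ ≤ ∑ i, k i * a i :=
        Finset.single_le_sum (f := fun i => k i * a i) (fun _ _ => Nat.zero_le _)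
          (Finset.mem_univ i)
    _ = d := hsum
  set P : MvPolynomial (Fin n) K := ∏ i, esymm (Fin n) K (k i) ^ a i with hP
  set v : Fin l → Fin n := fun i => ⟨k i - 1, by have := hkd i; omega⟩ with hv
  set w : Fin l → Fin n := fun i => ⟨k i - 2, by have := hkd i; omega⟩ with hw
  set F : MvPolynomial (Fin n) K →ₐ[K] MvPolynomial (Fin n) K :=
    (symmetricSubalgebra (Fin n) K).val.comp (esymmAlgHom (Fin n) K n) with hF
  have hFX : ∀ j : Fin n, F (X j) = esymm (Fin n) K (j + 1) := by
    intro j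
    show ((esymmAlgHom (Fin n) K n) (X j)).val = _
    rw [esymmAlgHom_apply, aeval_X]
  have hFinj : Function.Injective F := by
    rw [hF, AlgHom.coe_comp]
    exact Subtype.val_injective.comp (esymmAlgHom_fin_injective K le_rfl)
  have hFv : ∀ i, F (X (v i)) = esymm (Fin n) K (k i) := by
    intro i
    rw [hFX]
    congr 1
    show (k i - 1) + 1 = k i
    have := hk2 i; omega
  have hFw : ∀ i, F (X (w i)) = esymm (Fin n) K (k i - 1) := by
    intro i
    rw [hFX]
    congr 1
    show (k i - 2) + 1 = k i - 1
    have := hk2 i; omega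
  have hFP : F (∏ i, X (v i) ^ a i) = P := by
    rw [map_prod]
    exact Finset.prod_congr rfl fun i _ => by rw [map_pow, hFv]
  have hvinj : Function.Injective v := by
    intro i j h
    have h2 : k i - 1 = k j - 1 := congrArg Fin.val h
    exact hkinj (by have := hk2 i; have := hk2 j; omega)
  constructor
  · rintro ⟨g, hg⟩
    have hsum_esymm : (∑ j : Fin n, (X j : MvPolynomial (Fin n) K)) = esymm (Fin n) K 1 :=
      (esymm_one _ _).symm
    have he1ne : (esymm (Fin n) K 1 : MvPolynomial (Fin n) K) ≠ 0 := by
      intro h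
      apply hchar
      have h1 := congrArg (eval fun _ : Fin n => (1 : K)) h
      simpa [esymm_one] using h1
    have hgsym : g ∈ symmetricSubalgebra (Fin n) K := by
      rw [mem_symmetricSubalgebra]
      intro e
      have hPsym : rename e P = P := by
        rw [← hFP]
        exact ((esymmAlgHom (Fin n) K n) (∏ i, X (v i) ^ a i)).2 e
      have h2 : esymm (Fin n) K 1 * rename e g = esymm (Fin n) K 1 * g := by
        have h3 := hPsym
        rw [hg, hsum_esymm, map_mul, (esymm_isSymmetric (Fin n) K 1) e] at h3
        exact h3
      exact mul_left_cancel₀ he1ne h2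
    obtain ⟨q, hq⟩ := esymmAlgHom_fin_surjective K le_rfl ⟨g, hgsym⟩
    have hgq : F q = g := congrArg Subtype.val hq
    have hX0 : F (X (⟨0, hn0⟩ : Fin n) * q) = F (∏ i, X (v i) ^ a i) := by
      rw [map_mul, hFX, hgq, hFP, hg, hsum_esymm]
    have hXq := hFinj hX0
    have hev := congrArg (eval (fun j : Fin n => if j = ⟨0, hn0⟩ then (0 : K) else 1)) hXq
    rw [map_mul, eval_X, if_pos rfl, zero_mul, map_prod] at hev
    have hvne : ∀ i, (v i) ≠ (⟨0, hn0⟩ : Fin n) := by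
      intro i h
      have h2 : k i - 1 = 0 := congrArg Fin.val h
      have := hk2 i; omega
    rw [Finset.prod_congr rfl (fun i _ => by
      rw [map_pow, eval_X, if_neg (hvne i), one_pow])] at hev
    simp at hev
  · set DD : Derivation K (MvPolynomial (Fin n) K) (MvPolynomial (Fin n) K) :=
      ∑ j : Fin n, pderiv j with hDD
    have hDDapp : ∀ p : MvPolynomial (Fin n) K, DD p = ∑ j : Fin n, pderiv j p :=
      fun p => derivation_sum_apply' _ _ p
    rw [show (∑ j : Fin n, pderiv j P) = DD P from (hDDapp P).symm]
    set c : Fin l → ℕ := fun i => (n + 1 - k i) * a i with hc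
    set μ : Fin l → (Fin n →₀ ℕ) := fun i =>
      Finsupp.single (w i) 1 + Finsupp.single (v i) (a i - 1)
        + ∑ j ∈ univ.erase i, Finsupp.single (v j) (a j) with hμ
    set Q : Fin l → MvPolynomial (Fin n) K := fun i =>
      X (w i) * X (v i) ^ (a i - 1) * ∏ j ∈ univ.erase i, X (v j) ^ (a j) with hQ
    have hQmon : ∀ i, Q i = monomial (μ i) 1 := by
      intro i
      rw [hQ]
      simp only []
      rw [show (∏ j ∈ univ.erase i, (X (v j) : MvPolynomial (Fin n) K) ^ (a j))
          = ∏ j ∈ univ.erase i, monomial (Finsupp.single (v j) (a j)) (1 : K) from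
          Finset.prod_congr rfl fun j _ => X_pow_eq_monomial,
        prod_monomial_one', ← pow_one (X (w i) : MvPolynomial (Fin n) K),
        X_pow_eq_monomial, X_pow_eq_monomial, monomial_mul, monomial_mul, hμ]
      simp
    have hFQ : ∀ i, F (Q i) = esymm (Fin n) K (k i - 1) * esymm (Fin n) K (k i) ^ (a i - 1)
        * ∏ j ∈ univ.erase i, esymm (Fin n) K (k j) ^ (a j) := by
      intro i
      rw [hQ]
      simp only []
      rw [map_mul, map_mul, map_pow, map_prod, hFw i, hFv i]
      congr 1
      exact Finset.prod_congr rfl fun j _ => by rw [map_pow, hFv j]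
    have hDP : DD P = F (∑ i, (c i) • Q i) := by
      rw [map_sum, hP, derivation_prod]
      refine Finset.sum_congr rfl fun i _ => ?_
      have hde : DD (esymm (Fin n) K (k i)) = (n + 1 - k i) • esymm (Fin n) K (k i - 1) := by
        rw [hDDapp]
        exact sum_pderiv_esymm K (by have := hk2 i; omega) (by have := hkd i; omega)
      rw [Derivation.leibniz_pow, hde, map_nsmul, hFQ i]
      simp only [smul_eq_mul, nsmul_eq_mul, hc]
      push_cast
      ring
    rw [hDP]
    have hμinj : Function.Injective μ := by
      intro i i' h
      by_contra hne
      have h1 : (μ i) (v i) = (μ i') (v i) := by rw [h]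
      have hA : (μ i) (v i) = a i - 1 := by
        have hwv : w i ≠ v i := by
          intro hh
          have h2 : k i - 2 = k i - 1 := congrArg Fin.val hh
          have := hk2 i; omega
        rw [hμ]
        simp only [Finsupp.add_apply]
        rw [Finsupp.finset_sum_apply, Finset.sum_eq_zero (fun j hj => by
          rw [Finsupp.single_apply,
            if_neg (fun hh => (Finset.ne_of_mem_erase hj) (hvinj hh))]),
          Finsupp.single_apply, if_neg hwv, Finsupp.single_apply, if_pos rfl]
        omega
      have hB : (μ i') (v i) = (Finsupp.single (w i') 1) (v i)
          + (Finsupp.single (v i') (a i' - 1)) (v i) + a i := by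
        rw [hμ]
        simp only [Finsupp.add_apply]
        congr 1
        rw [Finsupp.finset_sum_apply]
        rw [Finset.sum_eq_single i (fun j _ hj => by
            rw [Finsupp.single_apply, if_neg (fun hh => hj (hvinj hh))])
          (fun hni => absurd (Finset.mem_erase.2 ⟨hne, Finset.mem_univ i⟩) hni),
          Finsupp.single_apply, if_pos rfl]
      rw [hA, hB] at h1
      have := ha1 i
      omega
    have hq0 : (∑ i, (c i) • Q i : MvPolynomial (Fin n) K) ≠ 0 := by
      obtain ⟨i0, hi0⟩ := hcoeff
      intro h
      have hmon : ∀ i : Fin l, (c i) • Q i = monomial (μ i) ((c i : K)) := by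
        intro i
        rw [hQmon i, smul_monomial, nsmul_eq_mul, mul_one]
      rw [Finset.sum_congr rfl (fun i _ => hmon i)] at h
      have hc0 := congrArg (coeff (μ i0)) h
      rw [coeff_zero, coeff_sum, Finset.sum_eq_single i0 (fun i _ hi => by
          rw [coeff_monomial, if_neg (fun hh => hi (hμinj hh))])
        (fun hni => absurd (Finset.mem_univ i0) hni), coeff_monomial, if_pos rfl] at hc0
      exact hi0 hc0
    intro h0
    exact hq0 (hFinj (h0.trans (map_zero F).symm))
end
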